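/- The simulation preorder is compositional: if (Γ1;Δ1) ≼_s (Γ2;Δ2), then ((Γ1;Δ1),(Γ;Δ)) ≼_s ((Γ2;Δ2),(Γ;Δ)) for every process state (Γ;Δ). -/
import Mathlib


/-- Formulas of the linear-logic fragment: atoms, 1, ⊗, ⊤, &, atomic-antecedent ⊸, !. -/
inductive Formula : Type where
  | atom : ℕ → Formula
  | one : Formula
  | tensor : Formula → Formula → Formula
  | top : Formula
  | with_ : Formula → Formula → Formula
  | limp : ℕ → Formula → Formula
  | bang : Formula → Formula
deriving DecidableEq

/-- Contexts are finite multisets of formulas. -/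
abbrev Ctx : Type := Multiset Formula

/-- A process state (Γ;Δ): unrestricted context Γ and linear context Δ. -/
abbrev State : Type := Ctx × Ctx

/-- Composition of states: ((Γ1;Δ1),(Γ2;Δ2)) = (Γ1,Γ2; Δ1,Δ2). -/
def State.comp (s t : State) : State := (s.1 + t.1, s.2 + t.2)

/-- DILL derivability Γ;Δ ⊢ A. -/
inductive Derives : Ctx → Ctx → Formula → Prop where
  | init (Γ : Ctx) (a : ℕ) : Derives Γ {Formula.atom a} (Formula.atom a)
  | clone {Γ Δ : Ctx} {A C : Formula} :
      Derives (A ::ₘ Γ) (A ::ₘ Δ) C → Derives (A ::ₘ Γ) Δ C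
  | tensorR {Γ Δ₁ Δ₂ : Ctx} {A B : Formula} :
      Derives Γ Δ₁ A → Derives Γ Δ₂ B → Derives Γ (Δ₁ + Δ₂) (Formula.tensor A B)
  | tensorL {Γ Δ : Ctx} {A B C : Formula} :
      Derives Γ (A ::ₘ B ::ₘ Δ) C → Derives Γ (Formula.tensor A B ::ₘ Δ) C
  | oneR (Γ : Ctx) : Derives Γ 0 Formula.one
  | oneL {Γ Δ : Ctx} {C : Formula} :
      Derives Γ Δ C → Derives Γ (Formula.one ::ₘ Δ) C
  | withR {Γ Δ : Ctx} {A B : Formula} :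
      Derives Γ Δ A → Derives Γ Δ B → Derives Γ Δ (Formula.with_ A B)
  | withL₁ {Γ Δ : Ctx} {A₁ A₂ C : Formula} :
      Derives Γ (A₁ ::ₘ Δ) C → Derives Γ (Formula.with_ A₁ A₂ ::ₘ Δ) C
  | withL₂ {Γ Δ : Ctx} {A₁ A₂ C : Formula} :
      Derives Γ (A₂ ::ₘ Δ) C → Derives Γ (Formula.with_ A₁ A₂ ::ₘ Δ) C
  | topR (Γ Δ : Ctx) : Derives Γ Δ Formula.top
  | limpR {Γ Δ : Ctx} {a : ℕ} {B : Formula} :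
      Derives Γ (Formula.atom a ::ₘ Δ) B → Derives Γ Δ (Formula.limp a B)
  | limpL {Γ Δ₁ Δ₂ : Ctx} {a : ℕ} {B C : Formula} :
      Derives Γ Δ₁ (Formula.atom a) → Derives Γ (B ::ₘ Δ₂) C →
      Derives Γ (Formula.limp a B ::ₘ (Δ₁ + Δ₂)) C
  | bangR {Γ : Ctx} {A : Formula} :
      Derives Γ 0 A → Derives Γ 0 (Formula.bang A)
  | bangL {Γ Δ : Ctx} {A C : Formula} :
      Derives (A ::ₘ Γ) Δ C → Derives Γ (Formula.bang A ::ₘ Δ) C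

/-- The logical preorder (Γ1;Δ1) ≼ₗ (Γ2;Δ2). -/
def LogicalPre (s t : State) : Prop :=
  ∀ (Γ' Δ' : Ctx) (C : Formula),
    Derives (Γ' + s.1) (Δ' + s.2) C → Derives (Γ' + t.1) (Δ' + t.2) C

/-- The reduction relation ⇝ on process states. -/
inductive Red : State → State → Prop where
  | tensor (Γ Δ : Ctx) (A B : Formula) :
      Red (Γ, Formula.tensor A B ::ₘ Δ) (Γ, A ::ₘ B ::ₘ Δ)
  | one (Γ Δ : Ctx) :
      Red (Γ, Formula.one ::ₘ Δ) (Γ, Δ)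
  | with₁ (Γ Δ : Ctx) (A₁ A₂ : Formula) :
      Red (Γ, Formula.with_ A₁ A₂ ::ₘ Δ) (Γ, A₁ ::ₘ Δ)
  | with₂ (Γ Δ : Ctx) (A₁ A₂ : Formula) :
      Red (Γ, Formula.with_ A₁ A₂ ::ₘ Δ) (Γ, A₂ ::ₘ Δ)
  | comm (Γ Δ : Ctx) (a : ℕ) (B : Formula) :
      Red (Γ, Formula.atom a ::ₘ Formula.limp a B ::ₘ Δ) (Γ, B ::ₘ Δ)
  | bang (Γ Δ : Ctx) (A : Formula) :
      Red (Γ, Formula.bang A ::ₘ Δ) (A ::ₘ Γ, Δ)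
  | clone (Γ Δ : Ctx) (A : Formula) :
      Red (A ::ₘ Γ, Δ) (A ::ₘ Γ, A ::ₘ Δ)

/-- ⇝*, the reflexive-transitive closure of reduction. -/
def RedStar : State → State → Prop := Relation.ReflTransGen Red

/-- Labels of the LTS: τ, send !a, receive ?a. -/
inductive Label : Type where
  | tau : Label
  | send : ℕ → Label
  | recv : ℕ → Label
deriving DecidableEq

/-- The labeled transition system on states. -/
inductive Step : State → Label → State → Prop where
  | send (Γ Δ : Ctx) (a : ℕ) :
      Step (Γ, Formula.atom a ::ₘ Δ) (Label.send a) (Γ, Δ)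
  | recv (Γ Δ : Ctx) (a : ℕ) (B : Formula) :
      Step (Γ, Formula.limp a B ::ₘ Δ) (Label.recv a) (Γ, B ::ₘ Δ)
  | comm {s₁ s₁' s₂ s₂' : State} {a : ℕ} :
      Step s₁ (Label.send a) s₁' → Step s₂ (Label.recv a) s₂' →
      Step (State.comp s₁ s₂) Label.tau (State.comp s₁' s₂')
  | tensor (Γ Δ : Ctx) (A B : Formula) :
      Step (Γ, Formula.tensor A B ::ₘ Δ) Label.tau (Γ, A ::ₘ B ::ₘ Δ)
  | one (Γ Δ : Ctx) :
      Step (Γ, Formula.one ::ₘ Δ) Label.tau (Γ, Δ)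
  | with₁ (Γ Δ : Ctx) (A₁ A₂ : Formula) :
      Step (Γ, Formula.with_ A₁ A₂ ::ₘ Δ) Label.tau (Γ, A₁ ::ₘ Δ)
  | with₂ (Γ Δ : Ctx) (A₁ A₂ : Formula) :
      Step (Γ, Formula.with_ A₁ A₂ ::ₘ Δ) Label.tau (Γ, A₂ ::ₘ Δ)
  | bang (Γ Δ : Ctx) (A : Formula) :
      Step (Γ, Formula.bang A ::ₘ Δ) Label.tau (A ::ₘ Γ, Δ)
  | clone (Γ Δ : Ctx) (A : Formula) :
      Step (A ::ₘ Γ, Δ) Label.tau (A ::ₘ Γ, A ::ₘ Δ)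

/-- ⇒τ, the reflexive-transitive closure of —τ→. -/
def WeakTau : State → State → Prop :=
  Relation.ReflTransGen (fun s t => Step s Label.tau t)

/-- Weak transition ⇒β: for β = τ it is ⇒τ, otherwise ⇒τ—β→⇒τ. -/
def WeakStep (s : State) (β : Label) (t : State) : Prop :=
  match β with
  | Label.tau => WeakTau s t
  | _ => ∃ u v, WeakTau s u ∧ Step u β v ∧ WeakTau v t

/-- A label is a "non-receive" label α (i.e., τ or a send). -/
def Label.isNonRecv : Label → Prop
  | Label.recv _ => False
  | _ => True

/-- A relation on states is a simulation. -/
def IsSimulation (R : State → State → Prop) : Prop :=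
  ∀ s t, R s t →
    (s.2 = 0 → ∃ Γ₂' : Ctx, WeakTau t (Γ₂', 0) ∧ R (s.1, 0) (Γ₂', 0)) ∧
    (∀ s₁ s₂ : State, s = State.comp s₁ s₂ →
      ∃ t₁ t₂ : State, WeakTau t (State.comp t₁ t₂) ∧ R s₁ t₁ ∧ R s₂ t₂) ∧
    (∀ (α : Label) (s' : State), α.isNonRecv → Step s α s' →
      ∃ t', WeakStep t α t' ∧ R s' t') ∧
    (∀ (a : ℕ) (s' : State), Step s (Label.recv a) s' →
      ∃ t', WeakTau (t.1, Formula.atom a ::ₘ t.2) t' ∧ R s' t')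

/-- The simulation preorder ≼ₛ. -/
def SimPre (s t : State) : Prop :=
  ∃ R : State → State → Prop, IsSimulation R ∧ R s t

/-- Strong barb: (Γ;Δ)↓a. -/
def Barb (s : State) (a : ℕ) : Prop := Formula.atom a ∈ s.2

/-- Weak barb: (Γ;Δ)⇓a. -/
def WeakBarb (s : State) (a : ℕ) : Prop := ∃ t, RedStar s t ∧ Barb t a

def BarbPreserving (R : State → State → Prop) : Prop :=
  ∀ s t a, R s t → Barb s a → WeakBarb t a

def ReductionClosed (R : State → State → Prop) : Prop :=
  ∀ s t s', R s t → Red s s' → ∃ t', RedStar t t' ∧ R s' t'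

def Compositional (R : State → State → Prop) : Prop :=
  ∀ s t u, R s t → R (State.comp s u) (State.comp t u)

def PartitionPreserving (R : State → State → Prop) : Prop :=
  ∀ s t, R s t →
    (s.2 = 0 → ∃ Γ₂' : Ctx, RedStar t (Γ₂', 0) ∧ R (s.1, 0) (Γ₂', 0)) ∧
    (∀ s₁ s₂ : State, s = State.comp s₁ s₂ →
      ∃ t₁ t₂ : State, RedStar t (State.comp t₁ t₂) ∧ R s₁ t₁ ∧ R s₂ t₂)

/-- The contextual preorder ≼_c: the largest barb-preserving, reduction-closed,
compositional, partition-preserving relation on states. -/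
def CtxPre (s t : State) : Prop :=
  ∃ R : State → State → Prop,
    BarbPreserving R ∧ ReductionClosed R ∧ Compositional R ∧ PartitionPreserving R ∧ R s t

/-- ⊗Δ: the ⊗-conjunction of all formulas in Δ (1 if Δ is empty). -/
noncomputable def bigTensor (Δ : Ctx) : Formula :=
  Δ.toList.foldr Formula.tensor Formula.one

/-- !Γ: prefix every formula of Γ with !. -/
def bangCtx (Γ : Ctx) : Ctx := Γ.map Formula.bang

section SimComp

private lemma cons_add_cases {x : Formula} {M A B : Ctx} (h : A + B = x ::ₘ M) :
    (∃ A', A = x ::ₘ A' ∧ M = A' + B) ∨ (∃ B', B = x ::ₘ B' ∧ M = A + B') := by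
  have hx : x ∈ A + B := by rw [h]; exact Multiset.mem_cons_self x M
  rcases Multiset.mem_add.1 hx with h1 | h1
  · left
    refine ⟨A.erase x, (Multiset.cons_erase h1).symm, ?_⟩
    have h2 : x ::ₘ (A.erase x + B) = x ::ₘ M := by
      rw [← Multiset.cons_add, Multiset.cons_erase h1, h]
    exact ((Multiset.cons_inj_right x).1 h2).symm
  · right
    refine ⟨B.erase x, (Multiset.cons_erase h1).symm, ?_⟩
    have h2 : x ::ₘ (A + B.erase x) = x ::ₘ M := by
      rw [← Multiset.add_cons, Multiset.cons_erase h1, h]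
    exact ((Multiset.cons_inj_right x).1 h2).symm

private lemma riesz (A B C D : Ctx) (h : A + B = C + D) :
    ∃ a₁ a₂ b₁ b₂ : Ctx, A = a₁ + a₂ ∧ B = b₁ + b₂ ∧ C = a₁ + b₁ ∧ D = a₂ + b₂ := by
  induction A using Multiset.induction generalizing C D with
  | empty => exact ⟨0, 0, C, D, by simp, by simpa using h, by simp, by simp⟩
  | cons x A ih =>
    have h' : C + D = x ::ₘ (A + B) := by rw [← h, Multiset.cons_add]
    rcases cons_add_cases h' with ⟨C', hC, hM⟩ | ⟨D', hD, hM⟩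
    · obtain ⟨a₁, a₂, b₁, b₂, hA, hB, hC', hD'⟩ := ih _ _ hM
      exact ⟨x ::ₘ a₁, a₂, b₁, b₂, by rw [hA, Multiset.cons_add], hB,
        by rw [hC, hC', Multiset.cons_add], hD'⟩
    · obtain ⟨a₁, a₂, b₁, b₂, hA, hB, hC', hD'⟩ := ih _ _ hM
      exact ⟨a₁, x ::ₘ a₂, b₁, b₂, by rw [hA, ← Multiset.add_cons x a₁ a₂], hB, hC',
        by rw [hD, hD', Multiset.cons_add]⟩

private lemma comp_comm (s u : State) : State.comp s u = State.comp u s := by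
  simp [State.comp, add_comm]

private lemma comp_assoc (s u v : State) :
    State.comp (State.comp s u) v = State.comp s (State.comp u v) := by
  simp [State.comp, add_assoc]

private lemma step_comp_left {s s' : State} {α : Label} (h : Step s α s') (u : State) :
    Step (State.comp s u) α (State.comp s' u) := by
  induction h with
  | send Γ Δ a =>
      have := Step.send (Γ + u.1) (Δ + u.2) a
      simpa [State.comp, Multiset.cons_add] using this
  | recv Γ Δ a B =>
      have := Step.recv (Γ + u.1) (Δ + u.2) a B
      simpa [State.comp, Multiset.cons_add] using this
  | comm h1 h2 ih1 ih2 =>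
      rename_i s₁ s₁' s₂ s₂' a
      have := Step.comm h1 (ih2)
      simpa [comp_assoc] using this
  | tensor Γ Δ A B =>
      have := Step.tensor (Γ + u.1) (Δ + u.2) A B
      simpa [State.comp, Multiset.cons_add] using this
  | one Γ Δ =>
      have := Step.one (Γ + u.1) (Δ + u.2)
      simpa [State.comp, Multiset.cons_add] using this
  | with₁ Γ Δ A₁ A₂ =>
      have := Step.with₁ (Γ + u.1) (Δ + u.2) A₁ A₂
      simpa [State.comp, Multiset.cons_add] using this
  | with₂ Γ Δ A₁ A₂ =>
      have := Step.with₂ (Γ + u.1) (Δ + u.2) A₁ A₂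
      simpa [State.comp, Multiset.cons_add] using this
  | bang Γ Δ A =>
      have := Step.bang (Γ + u.1) (Δ + u.2) A
      simpa [State.comp, Multiset.cons_add] using this
  | clone Γ Δ A =>
      have := Step.clone (Γ + u.1) (Δ + u.2) A
      simpa [State.comp, Multiset.cons_add] using this

private lemma step_comp_right {u u' : State} {α : Label} (h : Step u α u') (s : State) :
    Step (State.comp s u) α (State.comp s u') := by
  rw [comp_comm s u, comp_comm s u']; exact step_comp_left h s

private lemma weakTau_comp_left {t t' : State} (h : WeakTau t t') (u : State) :
    WeakTau (State.comp t u) (State.comp t' u) := by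
  induction h with
  | refl => exact Relation.ReflTransGen.refl
  | tail _ h2 ih => exact ih.tail (step_comp_left h2 u)

private lemma weakTau_comp_right {u u' : State} (h : WeakTau u u') (t : State) :
    WeakTau (State.comp t u) (State.comp t u') := by
  rw [comp_comm t u, comp_comm t u']; exact weakTau_comp_left h t

private lemma weakStep_comp_left {t t' : State} {α : Label} (h : WeakStep t α t') (u : State) :
    WeakStep (State.comp t u) α (State.comp t' u) := by
  cases α with
  | tau => exact weakTau_comp_left h u
  | send a =>
      obtain ⟨v, w, h1, h2, h3⟩ := h
      exact ⟨_, _, weakTau_comp_left h1 u, step_comp_left h2 u, weakTau_comp_left h3 u⟩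
  | recv a =>
      obtain ⟨v, w, h1, h2, h3⟩ := h
      exact ⟨_, _, weakTau_comp_left h1 u, step_comp_left h2 u, weakTau_comp_left h3 u⟩

end SimComp

private lemma step_comp_inv {s u w : State} {α : Label}
    (h : Step (State.comp s u) α w) :
    (∃ s', Step s α s' ∧ w = State.comp s' u) ∨
    (∃ u', Step u α u' ∧ w = State.comp s u') ∨
    (∃ (a : ℕ) (s' u' : State), α = Label.tau ∧ Step s (Label.send a) s' ∧
      Step u (Label.recv a) u' ∧ w = State.comp s' u') ∨
    (∃ (a : ℕ) (s' u' : State), α = Label.tau ∧ Step s (Label.recv a) s' ∧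
      Step u (Label.send a) u' ∧ w = State.comp s' u') := by
  obtain ⟨Γs, Δs⟩ := s
  obtain ⟨Γu, Δu⟩ := u
  have h : Step (Γs + Γu, Δs + Δu) α w := h
  generalize hG : Γs + Γu = G at h
  generalize hD : Δs + Δu = D at h
  cases h with
  | send _ Δ a =>
      rcases cons_add_cases hD with ⟨Δs', hs, hm⟩ | ⟨Δu', hs, hm⟩
      · exact Or.inl ⟨(Γs, Δs'), by rw [hs]; exact Step.send Γs Δs' a,
          by simp [State.comp, hm, ← hG]⟩
      · exact Or.inr <| Or.inl ⟨(Γu, Δu'), by rw [hs]; exact Step.send Γu Δu' a,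
          by simp [State.comp, hm, ← hG]⟩
  | recv _ Δ a B =>
      rcases cons_add_cases hD with ⟨Δs', hs, hm⟩ | ⟨Δu', hs, hm⟩
      · refine Or.inl ⟨(Γs, B ::ₘ Δs'), by rw [hs]; exact Step.recv Γs Δs' a B, ?_⟩
        simp [State.comp, hm, ← hG, Multiset.cons_add]
      · refine Or.inr <| Or.inl ⟨(Γu, B ::ₘ Δu'), by rw [hs]; exact Step.recv Γu Δu' a B, ?_⟩
        simp [State.comp, hm, ← hG, Multiset.add_cons]
  | tensor _ Δ A B =>
      rcases cons_add_cases hD with ⟨Δs', hs, hm⟩ | ⟨Δu', hs, hm⟩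
      · refine Or.inl ⟨(Γs, A ::ₘ B ::ₘ Δs'), by rw [hs]; exact Step.tensor Γs Δs' A B, ?_⟩
        simp [State.comp, hm, ← hG, Multiset.cons_add]
      · refine Or.inr <| Or.inl ⟨(Γu, A ::ₘ B ::ₘ Δu'), by rw [hs]; exact Step.tensor Γu Δu' A B, ?_⟩
        simp [State.comp, hm, ← hG, Multiset.add_cons]
  | one _ Δ =>
      rcases cons_add_cases hD with ⟨Δs', hs, hm⟩ | ⟨Δu', hs, hm⟩
      · exact Or.inl ⟨(Γs, Δs'), by rw [hs]; exact Step.one Γs Δs', by simp [State.comp, hm, ← hG]⟩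
      · exact Or.inr <| Or.inl ⟨(Γu, Δu'), by rw [hs]; exact Step.one Γu Δu',
          by simp [State.comp, hm, ← hG]⟩
  | with₁ _ Δ A₁ A₂ =>
      rcases cons_add_cases hD with ⟨Δs', hs, hm⟩ | ⟨Δu', hs, hm⟩
      · refine Or.inl ⟨(Γs, A₁ ::ₘ Δs'), by rw [hs]; exact Step.with₁ Γs Δs' A₁ A₂, ?_⟩
        simp [State.comp, hm, ← hG, Multiset.cons_add]
      · refine Or.inr <| Or.inl ⟨(Γu, A₁ ::ₘ Δu'), by rw [hs]; exact Step.with₁ Γu Δu' A₁ A₂, ?_⟩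
        simp [State.comp, hm, ← hG, Multiset.add_cons]
  | with₂ _ Δ A₁ A₂ =>
      rcases cons_add_cases hD with ⟨Δs', hs, hm⟩ | ⟨Δu', hs, hm⟩
      · refine Or.inl ⟨(Γs, A₂ ::ₘ Δs'), by rw [hs]; exact Step.with₂ Γs Δs' A₁ A₂, ?_⟩
        simp [State.comp, hm, ← hG, Multiset.cons_add]
      · refine Or.inr <| Or.inl ⟨(Γu, A₂ ::ₘ Δu'), by rw [hs]; exact Step.with₂ Γu Δu' A₁ A₂, ?_⟩
        simp [State.comp, hm, ← hG, Multiset.add_cons]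
  | bang _ Δ A =>
      rcases cons_add_cases hD with ⟨Δs', hs, hm⟩ | ⟨Δu', hs, hm⟩
      · refine Or.inl ⟨(A ::ₘ Γs, Δs'), by rw [hs]; exact Step.bang Γs Δs' A, ?_⟩
        simp [State.comp, hm, ← hG, Multiset.cons_add]
      · refine Or.inr <| Or.inl ⟨(A ::ₘ Γu, Δu'), by rw [hs]; exact Step.bang Γu Δu' A, ?_⟩
        simp [State.comp, hm, ← hG, Multiset.add_cons]
  | clone Γ _ A =>
      rcases cons_add_cases hG with ⟨Γs', hs, hm⟩ | ⟨Γu', hs, hm⟩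
      · refine Or.inl ⟨(Γs, A ::ₘ Δs), by rw [hs]; exact Step.clone Γs' Δs A, ?_⟩
        simp [State.comp, hm, ← hD, hs, Multiset.cons_add]
      · refine Or.inr <| Or.inl ⟨(Γu, A ::ₘ Δu), by rw [hs]; exact Step.clone Γu' Δu A, ?_⟩
        simp [State.comp, hm, ← hD, hs, Multiset.add_cons]
  | comm h1 h2 =>
      rename_i s₁ s₁' s₂ s₂' a
      cases h1 with
      | send Γ₁ D₁ a =>
      cases h2 with
      | recv Γ₂ D₂ a B =>
      have hD' : Δs + Δu = Formula.atom a ::ₘ (Formula.limp a B ::ₘ (D₁ + D₂)) := by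
        rw [hD, Multiset.cons_add, Multiset.add_cons]
      rcases cons_add_cases hD' with ⟨Δs1, hs1, hm1⟩ | ⟨Δu1, hu1, hm1⟩
      · rcases cons_add_cases hm1.symm with ⟨Δs2, hs2, hm2⟩ | ⟨Δu2, hu2, hm2⟩
        · -- both atom and limp in Δs : internal comm in s
          refine Or.inl ⟨(Γs, B ::ₘ Δs2), ?_, ?_⟩
          · have hst := Step.comm (Step.send Γs Δs2 a) (Step.recv 0 0 a B)
            have e1 : State.comp (Γs, Formula.atom a ::ₘ Δs2)
                ((0 : Ctx), (Formula.limp a B ::ₘ 0 : Ctx)) = (Γs, Δs) := by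
              simp [State.comp, hs1, hs2]
              rw [add_comm, Multiset.singleton_add]
            have e2 : State.comp (Γs, Δs2) ((0 : Ctx), (B ::ₘ 0 : Ctx)) = (Γs, B ::ₘ Δs2) := by
              simp [State.comp]
              rw [add_comm, Multiset.singleton_add]
            rw [e1, e2] at hst; exact hst
          · simp only [State.comp]
            refine Prod.ext hG.symm ?_
            show D₁ + (B ::ₘ D₂) = (B ::ₘ Δs2) + Δu
            rw [Multiset.add_cons, Multiset.cons_add, hm2]
        · -- atom in Δs, limp in Δu
          refine Or.inr <| Or.inr <| Or.inl ⟨a, (Γs, Δs1), (Γu, B ::ₘ Δu2), rfl,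
            by rw [hs1]; exact Step.send Γs Δs1 a,
            by rw [hu2]; exact Step.recv Γu Δu2 a B, ?_⟩
          simp only [State.comp]
          refine Prod.ext hG.symm ?_
          show D₁ + (B ::ₘ D₂) = Δs1 + (B ::ₘ Δu2)
          rw [Multiset.add_cons, Multiset.add_cons, hm2]
      · rcases cons_add_cases hm1.symm with ⟨Δs2, hs2, hm2⟩ | ⟨Δu2, hu2, hm2⟩
        · -- atom in Δu, limp in Δs
          refine Or.inr <| Or.inr <| Or.inr ⟨a, (Γs, B ::ₘ Δs2), (Γu, Δu1), rfl,
            by rw [hs2]; exact Step.recv Γs Δs2 a B,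
            by rw [hu1]; exact Step.send Γu Δu1 a, ?_⟩
          simp only [State.comp]
          refine Prod.ext hG.symm ?_
          show D₁ + (B ::ₘ D₂) = (B ::ₘ Δs2) + Δu1
          rw [Multiset.add_cons, Multiset.cons_add, hm2]
        · -- both in Δu : internal comm in u
          refine Or.inr <| Or.inl ⟨(Γu, B ::ₘ Δu2), ?_, ?_⟩
          · have hst := Step.comm (Step.send Γu Δu2 a) (Step.recv 0 0 a B)
            have e1 : State.comp (Γu, Formula.atom a ::ₘ Δu2)
                ((0 : Ctx), (Formula.limp a B ::ₘ 0 : Ctx)) = (Γu, Δu) := by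
              simp [State.comp, hu1, hu2]
              rw [add_comm, Multiset.singleton_add]
            have e2 : State.comp (Γu, Δu2) ((0 : Ctx), (B ::ₘ 0 : Ctx)) = (Γu, B ::ₘ Δu2) := by
              simp [State.comp]
              rw [add_comm, Multiset.singleton_add]
            rw [e1, e2] at hst; exact hst
          · simp only [State.comp]
            refine Prod.ext hG.symm ?_
            show D₁ + (B ::ₘ D₂) = Δs + (B ::ₘ Δu2)
            rw [Multiset.add_cons, Multiset.add_cons, hm2]


private lemma send_inv {u u' : State} {a : ℕ} (h : Step u (Label.send a) u') :
    ∃ Γ Δ, u = (Γ, Formula.atom a ::ₘ Δ) ∧ u' = (Γ, Δ) := by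
  cases h; exact ⟨_, _, rfl, rfl⟩

private lemma step_weakStep {s t : State} {α : Label} (h : Step s α t) : WeakStep s α t := by
  cases α with
  | tau => exact Relation.ReflTransGen.single h
  | send a => exact ⟨s, t, Relation.ReflTransGen.refl, h, Relation.ReflTransGen.refl⟩
  | recv a => exact ⟨s, t, Relation.ReflTransGen.refl, h, Relation.ReflTransGen.refl⟩

/-- the simulation preorder is compositional. -/
theorem simPre_compositional (s t : State) (h : SimPre s t) :
    ∀ u : State, SimPre (State.comp s u) (State.comp t u) := by
  intro u
  obtain ⟨R, hsim, hst⟩ := h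
  refine ⟨fun x y => ∃ p q v, R p q ∧ x = State.comp p v ∧ y = State.comp q v, ?_,
    s, t, u, hst, rfl, rfl⟩
  rintro x y ⟨p, q, v, hpq, rfl, rfl⟩
  refine ⟨?_, ?_, ?_, ?_⟩
  · -- clause 1 : empty linear context
    intro hx0
    have h0 : p.2 = 0 ∧ v.2 = 0 := by
      constructor
      · exact Multiset.le_zero.mp (hx0 ▸ Multiset.le_add_right _ _)
      · exact Multiset.le_zero.mp (hx0 ▸ Multiset.le_add_left _ _)
    obtain ⟨Γ₂', hwt, hR⟩ := ((hsim p q hpq).1) h0.1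
    refine ⟨Γ₂' + v.1, ?_, (p.1, 0), (Γ₂', 0), (v.1, 0), hR, ?_, ?_⟩
    · have := weakTau_comp_left hwt v
      have e : State.comp (Γ₂', 0) v = (Γ₂' + v.1, 0) := by
        simp [State.comp, h0.2]
      rw [e] at this; exact this
    · simp [State.comp]
    · simp [State.comp]
  · -- clause 2 : partition
    rintro s₁ s₂ hpart
    have h1 : p.1 + v.1 = s₁.1 + s₂.1 := congrArg Prod.fst hpart
    have h2 : p.2 + v.2 = s₁.2 + s₂.2 := congrArg Prod.snd hpart
    obtain ⟨a₁, a₂, b₁, b₂, hA, hB, hC, hDe⟩ := riesz _ _ _ _ h1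
    obtain ⟨c₁, c₂, d₁, d₂, hA', hB', hC', hDe'⟩ := riesz _ _ _ _ h2
    have hp : p = State.comp (a₁, c₁) (a₂, c₂) := by
      simp [State.comp, ← hA, ← hA']
    obtain ⟨t₁, t₂, hwt, hR₁, hR₂⟩ := ((hsim p q hpq).2.1) (a₁, c₁) (a₂, c₂) hp
    refine ⟨State.comp t₁ (b₁, d₁), State.comp t₂ (b₂, d₂), ?_, ?_, ?_⟩
    · have := weakTau_comp_left hwt v
      have e : State.comp (State.comp t₁ t₂) v
          = State.comp (State.comp t₁ (b₁, d₁)) (State.comp t₂ (b₂, d₂)) := by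
        obtain ⟨Γv, Δv⟩ := v
        have ev : Γv = b₁ + b₂ := hB
        have ev' : Δv = d₁ + d₂ := hB'
        simp only [State.comp, ev, ev', Prod.mk.injEq]
        constructor <;> ac_rfl
      rw [e] at this; exact this
    · exact ⟨(a₁, c₁), t₁, (b₁, d₁), hR₁, Prod.ext hC hC', rfl⟩
    · exact ⟨(a₂, c₂), t₂, (b₂, d₂), hR₂, Prod.ext hDe hDe', rfl⟩
  · -- clause 3 : α steps (τ or send)
    rintro α x' hα hstep
    rcases step_comp_inv hstep with ⟨p', hp, rfl⟩ | ⟨v', hv, rfl⟩ |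
      ⟨a, p', v', rfl, hp, hv, rfl⟩ | ⟨a, p', v', rfl, hp, hv, rfl⟩
    · obtain ⟨q', hwq, hR⟩ := ((hsim p q hpq).2.2.1) α p' hα hp
      exact ⟨State.comp q' v, weakStep_comp_left hwq v, p', q', v, hR, rfl, rfl⟩
    · exact ⟨State.comp q v', step_weakStep (step_comp_right hv q), p, q, v', hpq, rfl, rfl⟩
    · -- p sends, v receives
      obtain ⟨q', hwq, hR⟩ := ((hsim p q hpq).2.2.1) (Label.send a) p' trivial hp
      obtain ⟨m, n, hw1, hs2, hw3⟩ := hwq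
      refine ⟨State.comp q' v', ?_, p', q', v', hR, rfl, rfl⟩
      show WeakTau (State.comp q v) (State.comp q' v')
      exact ((weakTau_comp_left hw1 v).trans
        ((Relation.ReflTransGen.single (Step.comm hs2 hv)).trans
          (weakTau_comp_left hw3 v')))
    · -- p receives, v sends
      obtain ⟨q', hwq, hR⟩ := ((hsim p q hpq).2.2.2) a p' hp
      obtain ⟨Γv, Δv, rfl, rfl⟩ := send_inv hv
      refine ⟨State.comp q' (Γv, Δv), ?_, p', q', (Γv, Δv), hR, rfl, rfl⟩
      show WeakTau (State.comp q (Γv, Formula.atom a ::ₘ Δv)) (State.comp q' (Γv, Δv))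
      have e : State.comp q (Γv, Formula.atom a ::ₘ Δv)
          = State.comp (q.1, Formula.atom a ::ₘ q.2) (Γv, Δv) :=
        Prod.ext rfl (by simp only [State.comp]; rw [Multiset.add_cons, Multiset.cons_add])
      rw [e]
      exact weakTau_comp_left hwq (Γv, Δv)
  · -- clause 4 : receives
    rintro a x' hstep
    rcases step_comp_inv hstep with ⟨p', hp, rfl⟩ | ⟨v', hv, rfl⟩ |
      ⟨b, p', v', hτ, hp, hv, rfl⟩ | ⟨b, p', v', hτ, hp, hv, rfl⟩
    · obtain ⟨q', hwq, hR⟩ := ((hsim p q hpq).2.2.2) a p' hp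
      refine ⟨State.comp q' v, ?_, p', q', v, hR, rfl, rfl⟩
      have e : (((State.comp q v).1 : Ctx), Formula.atom a ::ₘ (State.comp q v).2)
          = State.comp (q.1, Formula.atom a ::ₘ q.2) v :=
        Prod.ext rfl (by simp only [State.comp]; rw [Multiset.cons_add])
      rw [e]
      exact weakTau_comp_left hwq v
    · refine ⟨State.comp q v', ?_, p, q, v', hpq, rfl, rfl⟩
      have hc := Step.comm (Step.send q.1 q.2 a) hv
      have e : State.comp (q.1, Formula.atom a ::ₘ q.2) v
          = (((State.comp q v).1 : Ctx), Formula.atom a ::ₘ (State.comp q v).2) :=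
        Prod.ext rfl (by simp only [State.comp]; rw [Multiset.cons_add])
      rw [e] at hc
      exact Relation.ReflTransGen.single hc
    · exact absurd hτ (by simp)
    · exact absurd hτ (by simp)
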